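/- arXiv:1504.07132 — 9 statements merged into one kernel-verified Lean document; each statement's English description precedes it below -/
import Mathlib

section
/- Let A and B be nonempty finite sets of nonnegative integers. Then |A + B| ≤ |A|·|B|, and equality |A + B| = |A|·|B| holds if and only if the difference sets D_A and D_B are disjoint. -/
open Finset Pointwise

/-- The difference set of a finset of naturals:
the set of positive differences of distinct elements. -/
def diffSet (A : Finset ℕ) : Finset ℕ :=
  ((A ×ˢ A).filter fun p => p.2 < p.1).image fun p => p.1 - p.2

lemma mem_diffSet {A : Finset ℕ} {d : ℕ} :
    d ∈ diffSet A ↔ ∃ a ∈ A, ∃ b ∈ A, b < a ∧ a - b = d := by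
  simp only [diffSet, mem_image, mem_filter, mem_product, Prod.exists]
  constructor
  · rintro ⟨a, b, ⟨⟨ha, hb⟩, hlt⟩, hd⟩
    exact ⟨a, ha, b, hb, hlt, hd⟩
  · rintro ⟨a, ha, b, hb, hlt, hd⟩
    exact ⟨a, b, ⟨⟨ha, hb⟩, hlt⟩, hd⟩

/-- For nonempty finite sets `A`, `B` of nonnegative integers, `|A + B| ≤ |A|·|B|`, and
equality holds iff the difference sets `D_A` and `D_B` are disjoint. -/
theorem sumset_card_le_and_eq_iff_disjoint_diffSet (A B : Finset ℕ)
    (hA : A.Nonempty) (hB : B.Nonempty) :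
    (A + B).card ≤ A.card * B.card ∧
      ((A + B).card = A.card * B.card ↔ Disjoint (diffSet A) (diffSet B)) := by
  have himg : A + B = (A ×ˢ B).image (fun p : ℕ × ℕ => p.1 + p.2) := by
    ext x
    simp [Finset.mem_add, Finset.mem_product, and_assoc]
  have hcard : A.card * B.card = (A ×ˢ B).card := (Finset.card_product A B).symm
  rw [himg, hcard]
  refine ⟨Finset.card_image_le, ?_⟩
  rw [Finset.card_image_iff]
  constructor
  · -- InjOn → Disjoint
    intro hinj
    rw [Finset.disjoint_left]
    intro d hdA hdB
    obtain ⟨a, ha, a', ha', hlt, hda⟩ := mem_diffSet.mp hdA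
    obtain ⟨b, hb, b', hb', hlt', hdb⟩ := mem_diffSet.mp hdB
    have heq : a + b' = a' + b := by omega
    have := hinj (by simp [ha, hb'] : ((a, b') : ℕ × ℕ) ∈ (A ×ˢ B : Finset (ℕ × ℕ)))
      (by simp [ha', hb] : ((a', b) : ℕ × ℕ) ∈ (A ×ˢ B : Finset (ℕ × ℕ))) heq
    have : a = a' := congrArg Prod.fst this
    omega
  · -- Disjoint → InjOn
    intro hdisj p hp q hq heq0
    have heq : p.1 + p.2 = q.1 + q.2 := heq0
    simp only [Finset.coe_product, Set.mem_prod, Finset.mem_coe] at hp hq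
    have hd := Finset.disjoint_left.mp hdisj
    rcases lt_trichotomy p.1 q.1 with h | h | h
    · exfalso
      have hA' : q.1 - p.1 ∈ diffSet A := mem_diffSet.mpr ⟨q.1, hq.1, p.1, hp.1, h, rfl⟩
      have hB' : q.1 - p.1 ∈ diffSet B := mem_diffSet.mpr ⟨p.2, hp.2, q.2, hq.2, by omega, by omega⟩
      exact hd hA' hB'
    · have : p.2 = q.2 := by omega
      exact Prod.ext h this
    · exfalso
      have hA' : p.1 - q.1 ∈ diffSet A := mem_diffSet.mpr ⟨p.1, hp.1, q.1, hq.1, h, rfl⟩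
      have hB' : p.1 - q.1 ∈ diffSet B := mem_diffSet.mpr ⟨q.2, hq.2, p.2, hp.2, by omega, by omega⟩
      exact hd hA' hB'
end

section
/- A simple graph G on a finite vertex set admits a strong integer additive set-labeling if and only if there exists an injective assignment f of nonempty finite sets of nonnegative integers to the vertices of G such that for every pair of adjacent vertices u, v the difference sets D_{f(u)} and D_{f(v)} are disjoint. -/
open Finset Pointwise

lemma key (A B : Finset ℕ) :
    (A + B).card = A.card * B.card ↔ Disjoint (diffSet A) (diffSet B) := by
  rw [Finset.card_add_iff]
  constructor
  · intro hinj
    rw [Finset.disjoint_left]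
    intro d hdA hdB
    obtain ⟨a₁, ha₁, a₂, ha₂, hlta, hda⟩ := mem_diffSet.1 hdA
    obtain ⟨b₁, hb₁, b₂, hb₂, hltb, hdb⟩ := mem_diffSet.1 hdB
    have heq : a₁ + b₂ = a₂ + b₁ := by omega
    have := hinj (by simp [Set.mem_prod, ha₁, hb₂] : ((a₁, b₂) : ℕ × ℕ) ∈ (A : Set ℕ) ×ˢ (B : Set ℕ))
      (by simp [Set.mem_prod, ha₂, hb₁] : ((a₂, b₁) : ℕ × ℕ) ∈ (A : Set ℕ) ×ˢ (B : Set ℕ)) heq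
    have : a₁ = a₂ := congrArg Prod.fst this
    omega
  · intro hdisj
    rintro ⟨a, b⟩ hab ⟨a', b'⟩ hab' heq
    simp only [Set.mem_prod, Finset.mem_coe] at hab hab'
    simp only at heq
    rcases lt_trichotomy a a' with h | h | h
    · exfalso
      have hA : a' - a ∈ diffSet A := mem_diffSet.2 ⟨a', hab'.1, a, hab.1, h, rfl⟩
      have hB : a' - a ∈ diffSet B := mem_diffSet.2 ⟨b, hab.2, b', hab'.2, by omega, by omega⟩
      exact Finset.disjoint_left.1 hdisj hA hB
    · have : b = b' := by omega
      simp [h, this]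
    · exfalso
      have hA : a - a' ∈ diffSet A := mem_diffSet.2 ⟨a, hab.1, a', hab'.1, h, rfl⟩
      have hB : a - a' ∈ diffSet B := mem_diffSet.2 ⟨b', hab'.2, b, hab.2, by omega, by omega⟩
      exact Finset.disjoint_left.1 hdisj hA hB

/-- A graph admits a strong integer additive set-labeling iff there is an injective
assignment of nonempty finite sets of nonnegative integers to the vertices such that
the difference sets of the set-labels of any two adjacent vertices are disjoint. -/
theorem admits_strong_IASL_iff_exists_disjoint_diffSets
    {V : Type*} [Fintype V] (G : SimpleGraph V) :
    (∃ f : V → Finset ℕ, (∀ v, (f v).Nonempty) ∧ Function.Injective f ∧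
        ∀ u v, G.Adj u v → (f u + f v).card = (f u).card * (f v).card) ↔
      (∃ f : V → Finset ℕ, (∀ v, (f v).Nonempty) ∧ Function.Injective f ∧
        ∀ u v, G.Adj u v → Disjoint (diffSet (f u)) (diffSet (f v))) := by
  constructor
  · rintro ⟨f, h1, h2, h3⟩
    exact ⟨f, h1, h2, fun u v huv => (key _ _).1 (h3 u v huv)⟩
  · rintro ⟨f, h1, h2, h3⟩
    exact ⟨f, h1, h2, fun u v huv => (key _ _).2 (h3 u v huv)⟩
end

section
/- Let f be an injective assignment of nonempty finite sets of nonnegative integers to the vertices of the complete graph K_n. Then f is a strong integer additive set-labeling of K_n if and only if the difference sets D_{f(v)} of the set-labels of the vertices are pairwise disjoint, i.e., D_{f(u)} ∩ D_{f(v)} = ∅ for all distinct vertices u, v. -/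
open Finset Pointwise

/-- An injective assignment of nonempty finite sets of nonnegative integers to the vertices
of the complete graph `K_n` is a strong integer additive set-labeling iff the difference
sets of the set-labels of the vertices are pairwise disjoint. -/
theorem strong_IASL_completeGraph_iff_pairwise_disjoint_diffSets
    (n : ℕ) (f : Fin n → Finset ℕ)
    (hinj : Function.Injective f) (hne : ∀ v, (f v).Nonempty) :
    (∀ u v : Fin n, (⊤ : SimpleGraph (Fin n)).Adj u v →
        (f u + f v).card = (f u).card * (f v).card) ↔
      ∀ u v : Fin n, u ≠ v → Disjoint (diffSet (f u)) (diffSet (f v)) := by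
  simp only [SimpleGraph.top_adj]
  constructor
  · intro h u v huv
    exact (key _ _).1 (h u v huv)
  · intro h u v huv
    exact (key _ _).2 (h u v huv)
end

section
/- Let G₁ and G₂ be simple graphs on finite vertex sets. The disjoint union G₁ ∪ G₂ (the graph on the disjoint sum of the two vertex sets whose edges are exactly the edges of G₁ together with the edges of G₂) admits a strong integer additive set-indexer if and only if both G₁ and G₂ admit strong integer additive set-indexers. -/
open Finset Pointwise

/-- The edge labeling induced by a vertex set-labeling `f`,
assigning to the edge `uv` the sumset `f(u) + f(v)`. -/
def edgeLabel {V : Type*} (f : V → Finset ℕ) : Sym2 V → Finset ℕ :=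
  Sym2.lift ⟨fun u v => f u + f v, fun u v => add_comm (f u) (f v)⟩

/-- `f` is a strong integer additive set-indexer of `G`: an injective assignment of
nonempty finite sets of nonnegative integers to the vertices whose induced edge labeling
is injective on the edge set and satisfies `|f(u) + f(v)| = |f(u)|·|f(v)|` on edges. -/
def IsStrongIASI {V : Type*} (G : SimpleGraph V) (f : V → Finset ℕ) : Prop :=
  (∀ v, (f v).Nonempty) ∧ Function.Injective f ∧
    Set.InjOn (edgeLabel f) G.edgeSet ∧
    ∀ u v, G.Adj u v → (f u + f v).card = (f u).card * (f v).card

@[simp] lemma edgeLabel_mk {V : Type*} (f : V → Finset ℕ) (u v : V) :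
    edgeLabel f s(u, v) = f u + f v := rfl

lemma image_add_image (A B : Finset ℕ) (M : ℕ) :
    A.image (· + M) + B.image (· + M) = (A + B).image (· + (M + M)) := by
  ext x
  simp only [Finset.mem_add, Finset.mem_image]
  constructor
  · rintro ⟨_, ⟨a, ha, rfl⟩, _, ⟨b, hb, rfl⟩, rfl⟩
    exact ⟨a + b, ⟨a, ha, b, hb, rfl⟩, by omega⟩
  · rintro ⟨_, ⟨a, ha, b, hb, rfl⟩, rfl⟩
    exact ⟨a + M, ⟨a, ha, rfl⟩, b + M, ⟨b, hb, rfl⟩, by omega⟩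

/-- The disjoint union `G₁ ∪ G₂` admits a strong integer additive set-indexer iff
both `G₁` and `G₂` admit strong integer additive set-indexers. -/
theorem sum_admits_strongIASI_iff {V₁ V₂ : Type*} [Fintype V₁] [Fintype V₂]
    (G₁ : SimpleGraph V₁) (G₂ : SimpleGraph V₂) :
    (∃ f : V₁ ⊕ V₂ → Finset ℕ, IsStrongIASI (G₁ ⊕g G₂) f) ↔
      (∃ f₁ : V₁ → Finset ℕ, IsStrongIASI G₁ f₁) ∧
        (∃ f₂ : V₂ → Finset ℕ, IsStrongIASI G₂ f₂) := by
  constructor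
  · rintro ⟨f, hne, hinj, hlab, hcard⟩
    constructor
    · refine ⟨f ∘ Sum.inl, fun v => hne _, hinj.comp Sum.inl_injective, ?_, ?_⟩
      · intro e he e' he' h
        induction e using Sym2.ind with | _ a b =>
        induction e' using Sym2.ind with | _ c d =>
        rw [SimpleGraph.mem_edgeSet] at he he'
        have h2 : edgeLabel f s(Sum.inl a, Sum.inl b) = edgeLabel f s(Sum.inl c, Sum.inl d) := h
        have := hlab (by simpa using he : s(Sum.inl a, Sum.inl b) ∈ (G₁ ⊕g G₂).edgeSet)
          (by simpa using he' : s(Sum.inl c, Sum.inl d) ∈ (G₁ ⊕g G₂).edgeSet) h2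
        rw [Sym2.eq_iff] at this ⊢
        rcases this with ⟨h1, h2⟩ | ⟨h1, h2⟩
        · exact Or.inl ⟨Sum.inl_injective h1, Sum.inl_injective h2⟩
        · exact Or.inr ⟨Sum.inl_injective h1, Sum.inl_injective h2⟩
      · intro u v huv
        exact hcard (Sum.inl u) (Sum.inl v) (by simpa using huv)
    · refine ⟨f ∘ Sum.inr, fun v => hne _, hinj.comp Sum.inr_injective, ?_, ?_⟩
      · intro e he e' he' h
        induction e using Sym2.ind with | _ a b =>
        induction e' using Sym2.ind with | _ c d =>
        rw [SimpleGraph.mem_edgeSet] at he he'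
        have h2 : edgeLabel f s(Sum.inr a, Sum.inr b) = edgeLabel f s(Sum.inr c, Sum.inr d) := h
        have := hlab (by simpa using he : s(Sum.inr a, Sum.inr b) ∈ (G₁ ⊕g G₂).edgeSet)
          (by simpa using he' : s(Sum.inr c, Sum.inr d) ∈ (G₁ ⊕g G₂).edgeSet) h2
        rw [Sym2.eq_iff] at this ⊢
        rcases this with ⟨h1, h2⟩ | ⟨h1, h2⟩
        · exact Or.inl ⟨Sum.inr_injective h1, Sum.inr_injective h2⟩
        · exact Or.inr ⟨Sum.inr_injective h1, Sum.inr_injective h2⟩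
      · intro u v huv
        exact hcard (Sum.inr u) (Sum.inr v) (by simpa using huv)
  · rintro ⟨⟨f₁, hne₁, hinj₁, hlab₁, hcard₁⟩, ⟨f₂, hne₂, hinj₂, hlab₂, hcard₂⟩⟩
    set M : ℕ := (Finset.univ.sup fun v => (f₁ v).sup id) + 1 with hM
    have hlt : ∀ v : V₁, ∀ x ∈ f₁ v, x < M := by
      intro v x hx
      have : x ≤ (f₁ v).sup id := Finset.le_sup (f := id) hx
      have h2 : (f₁ v).sup id ≤ Finset.univ.sup fun v => (f₁ v).sup id :=
        Finset.le_sup (f := fun v => (f₁ v).sup id) (Finset.mem_univ v)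
      omega
    set F : V₁ ⊕ V₂ → Finset ℕ :=
      Sum.elim f₁ (fun v => (f₂ v).image (· + M)) with hF
    have hMinj : Function.Injective (· + M : ℕ → ℕ) := add_left_injective M
    have h2Minj : Function.Injective (· + (M + M) : ℕ → ℕ) := add_left_injective (M + M)
    -- no set on the left equals a set on the right
    have hsep : ∀ (u : V₁) (v : V₂), f₁ u ≠ (f₂ v).image (· + M) := by
      intro u v h
      obtain ⟨x, hx⟩ := hne₁ u
      have hxM := hlt u x hx
      rw [h] at hx
      simp only [Finset.mem_image] at hx
      obtain ⟨y, _, rfl⟩ := hx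
      omega
    have hlabsep : ∀ (a b : V₁) (c d : V₂),
        f₁ a + f₁ b ≠ (f₂ c + f₂ d).image (· + (M + M)) := by
      intro a b c d h
      obtain ⟨x, hx⟩ := hne₁ a
      obtain ⟨y, hy⟩ := hne₁ b
      have hmem : x + y ∈ f₁ a + f₁ b := Finset.add_mem_add hx hy
      have hxM := hlt a x hx
      have hyM := hlt b y hy
      rw [h] at hmem
      simp only [Finset.mem_image] at hmem
      obtain ⟨z, _, hz⟩ := hmem
      omega
    refine ⟨F, ?_, ?_, ?_, ?_⟩
    · rintro (v | v)
      · exact hne₁ v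
      · exact (hne₂ v).image _
    · rintro (u | u) (v | v) h
      · exact congrArg Sum.inl (hinj₁ h)
      · exact absurd h (hsep u v)
      · exact absurd h.symm (hsep v u)
      · exact congrArg Sum.inr (hinj₂ (Finset.image_injective hMinj h))
    · intro e he e' he' h
      induction e using Sym2.ind with | _ a b =>
      induction e' using Sym2.ind with | _ c d =>
      rw [SimpleGraph.mem_edgeSet] at he he'
      rcases a with a | a <;> rcases b with b | b <;> simp only [SimpleGraph.sum_adj] at he <;>
        try exact absurd he (by simp)
      all_goals rcases c with c | c <;> rcases d with d | d <;>
        simp only [SimpleGraph.sum_adj] at he' <;> try exact absurd he' (by simp)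
      · -- inl-inl vs inl-inl
        have h2 : edgeLabel f₁ s(a, b) = edgeLabel f₁ s(c, d) := h
        have := hlab₁ (G₁.mem_edgeSet.mpr he) (G₁.mem_edgeSet.mpr he') h2
        rw [Sym2.eq_iff] at this ⊢
        rcases this with ⟨h1, h2⟩ | ⟨h1, h2⟩
        · exact Or.inl ⟨congrArg _ h1, congrArg _ h2⟩
        · exact Or.inr ⟨congrArg _ h1, congrArg _ h2⟩
      · -- inl-inl vs inr-inr
        have h2 : f₁ a + f₁ b = (f₂ c + f₂ d).image (· + (M + M)) := by
          have := h
          simp only [edgeLabel_mk, hF, Sum.elim_inl, Sum.elim_inr] at this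
          rw [image_add_image] at this
          exact this
        exact absurd h2 (hlabsep a b c d)
      · -- inr-inr vs inl-inl
        have h2 : f₁ c + f₁ d = (f₂ a + f₂ b).image (· + (M + M)) := by
          have := h.symm
          simp only [edgeLabel_mk, hF, Sum.elim_inl, Sum.elim_inr] at this
          rw [image_add_image] at this
          exact this
        exact absurd h2 (hlabsep c d a b)
      · -- inr-inr vs inr-inr
        have h2 : (f₂ a + f₂ b).image (· + (M + M)) = (f₂ c + f₂ d).image (· + (M + M)) := by
          have := h
          simp only [edgeLabel_mk, hF, Sum.elim_inr] at this
          rw [image_add_image, image_add_image] at this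
          exact this
        have h3 : edgeLabel f₂ s(a, b) = edgeLabel f₂ s(c, d) :=
          Finset.image_injective h2Minj h2
        have := hlab₂ (G₂.mem_edgeSet.mpr he) (G₂.mem_edgeSet.mpr he') h3
        rw [Sym2.eq_iff] at this ⊢
        rcases this with ⟨h1, h2⟩ | ⟨h1, h2⟩
        · exact Or.inl ⟨congrArg _ h1, congrArg _ h2⟩
        · exact Or.inr ⟨congrArg _ h1, congrArg _ h2⟩
    · rintro (u | u) (v | v) h
      · exact hcard₁ u v (by simpa using h)
      · exact absurd h (by simp)
      · exact absurd h (by simp)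
      · simp only [hF, Sum.elim_inr]
        rw [image_add_image, Finset.card_image_of_injective _ h2Minj,
          Finset.card_image_of_injective _ hMinj, Finset.card_image_of_injective _ hMinj]
        exact hcard₂ u v (by simpa using h)
end

section
/- Let G be a simple graph on a finite vertex set with a strong integer additive set-labeling f, and let u, v, w be vertices with uv and vw edges of G, u ≠ w, and |f(v)| ≥ 2. Then the induced labels of the two adjacent edges violate the strongness condition: |(f(u) + f(v)) + (f(v) + f(w))| < |f(u) + f(v)| · |f(v) + f(w)|. (Consequently the line graph of a strong IASI-graph does not admit the induced strong IASI.) -/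
open Finset Pointwise

/-- `f` is a strong integer additive set-labeling of `G`. -/
def IsStrongIASL {V : Type*} (G : SimpleGraph V) (f : V → Finset ℕ) : Prop :=
  (∀ v, (f v).Nonempty) ∧ Function.Injective f ∧
    ∀ u v, G.Adj u v → (f u + f v).card = (f u).card * (f v).card

lemma add_self_card_lt (B : Finset ℕ) (hB : 2 ≤ B.card) :
    (B + B).card < B.card * B.card := by
  obtain ⟨a, ha, b, hb, hab⟩ := Finset.one_lt_card.mp hB
  rw [Finset.add_def]
  calc ((B ×ˢ B).image fun p => p.1 + p.2).card
      < (B ×ˢ B).card := by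
        refine lt_of_le_of_ne Finset.card_image_le fun h => ?_
        have hinj := Finset.card_image_iff.mp h
        have := hinj (show ((a, b) : ℕ × ℕ) ∈ ↑(B ×ˢ B) by simp [ha, hb])
          (show ((b, a) : ℕ × ℕ) ∈ ↑(B ×ˢ B) by simp [ha, hb]) (by simp [Nat.add_comm])
        exact hab (congrArg Prod.fst this)
    _ = B.card * B.card := by rw [Finset.card_product]

/-- For a strong IASL `f` of `G` and adjacent edges `uv`, `vw` with `|f(v)| ≥ 2`, the
induced labels of the two adjacent edges violate the strongness condition; consequently
the line graph of a strong IASI-graph does not admit the induced strong IASI. -/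
theorem adjacent_edge_labels_not_strong {V : Type*} [Fintype V] (G : SimpleGraph V)
    (f : V → Finset ℕ) (hf : IsStrongIASL G f) (u v w : V)
    (huv : G.Adj u v) (hvw : G.Adj v w) (huw : u ≠ w) (hv : 2 ≤ (f v).card) :
    ((f u + f v) + (f v + f w)).card < (f u + f v).card * (f v + f w).card := by
  obtain ⟨hne, -, hstrong⟩ := hf
  set A := f u; set B := f v; set C := f w
  rw [hstrong u v huv, hstrong v w hvw]
  have hA := (hne u).card_pos
  have hC := (hne w).card_pos
  have h1 : (A + B) + (B + C) = (A + (B + B)) + C := by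
    rw [add_assoc, add_assoc, add_assoc]
  rw [h1]
  calc ((A + (B + B)) + C).card ≤ (A + (B + B)).card * C.card := Finset.card_add_le
    _ ≤ (A.card * (B + B).card) * C.card :=
        Nat.mul_le_mul_right _ Finset.card_add_le
    _ < (A.card * (B.card * B.card)) * C.card :=
        Nat.mul_lt_mul_of_lt_of_le
          ((Nat.mul_lt_mul_left hA).mpr (add_self_card_lt B hv)) le_rfl hC
    _ = (A.card * B.card) * (B.card * C.card) := by ring
end

section
/- For every positive integer k, every bipartite simple graph on a finite vertex set admits a strongly k-uniform integer additive set-indexer: there is an injective assignment f of nonempty finite sets of nonnegative integers to the vertices such that the induced edge labeling f⁺(uv) = f(u) + f(v) is injective on the edge set and |f⁺(uv)| = k = |f(u)|·|f(v)| for every edge uv. -/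
open Finset Pointwise

/-- For every positive integer `k`, every bipartite (2-colorable) graph on a finite
vertex set admits a strongly `k`-uniform integer additive set-indexer. -/
theorem bipartite_admits_strongly_uniform_IASI {V : Type*} [Fintype V]
    (G : SimpleGraph V) (k : ℕ) (hk : 0 < k) (hbip : G.Colorable 2) :
    ∃ f : V → Finset ℕ, (∀ v, (f v).Nonempty) ∧ Function.Injective f ∧
      Set.InjOn (edgeLabel f) G.edgeSet ∧
      ∀ u v, G.Adj u v → (f u + f v).card = k ∧ k = (f u).card * (f v).card := by
  classical
  obtain ⟨C⟩ := hbip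
  set n := Fintype.card V with hn
  set idx : V → ℕ := fun v => (Fintype.equivFin V v : ℕ) with hidx
  have idx_lt : ∀ v, idx v < n := fun v => (Fintype.equivFin V v).isLt
  have idx_inj : Function.Injective idx := fun a b h =>
    (Fintype.equivFin V).injective (Fin.ext h)
  set base : V → ℕ := fun v => if C v = 0 then idx v else n * (idx v + 1) with hbase
  set sz : V → ℕ := fun v => if C v = 0 then 1 else k with hsz
  set f : V → Finset ℕ := fun v => (range (sz v)).image (base v + ·) with hf
  have sz_pos : ∀ v, 0 < sz v := by
    intro v; simp only [hsz]; split <;> omega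
  have mem_f : ∀ v m, m ∈ f v ↔ base v ≤ m ∧ m < base v + sz v := by
    intro v m
    simp only [hf, Finset.mem_image, Finset.mem_range]
    constructor
    · rintro ⟨j, hj, rfl⟩; omega
    · intro h; exact ⟨m - base v, by omega, by omega⟩
  have card_f : ∀ v, (f v).card = sz v := by
    intro v
    rw [hf]
    rw [Finset.card_image_of_injective _ (fun a b h => by simpa using h),
      Finset.card_range]
  have mem_sum : ∀ u v m, m ∈ f u + f v ↔
      base u + base v ≤ m ∧ m < base u + base v + (sz u + sz v - 1) := by
    intro u v m
    rw [Finset.mem_add]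
    have hu := sz_pos u; have hv := sz_pos v
    constructor
    · rintro ⟨a, ha, b, hb, rfl⟩
      rw [mem_f] at ha hb; omega
    · intro h
      refine ⟨base u + min (sz u - 1) (m - base u - base v), (mem_f _ _).mpr ⟨by omega, by omega⟩,
        m - (base u + min (sz u - 1) (m - base u - base v)), (mem_f _ _).mpr ⟨by omega, by omega⟩,
        by omega⟩
  have card_sum : ∀ u v, (f u + f v).card = sz u + sz v - 1 := by
    intro u v
    have : f u + f v = (range (sz u + sz v - 1)).image ((base u + base v) + ·) := by
      ext m
      rw [mem_sum]
      simp only [Finset.mem_image, Finset.mem_range]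
      constructor
      · intro h; exact ⟨m - (base u + base v), by omega, by omega⟩
      · rintro ⟨j, hj, rfl⟩; omega
    rw [this, Finset.card_image_of_injective _ (fun a b h => by simpa using h),
      Finset.card_range]
  -- key: recovering the endpoints of an edge from the sumset
  have key : ∀ u v u' v', C u = 0 → C v ≠ 0 → C u' = 0 → C v' ≠ 0 →
      f u + f v = f u' + f v' → u = u' ∧ v = v' := by
    intro u v u' v' hu hv hu' hv' heq
    have npos : 0 < n := Fintype.card_pos_iff.mpr ⟨u⟩
    have h1 : base u + base v = base u' + base v' := by
      have m1 : base u + base v ∈ f u + f v :=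
        (mem_sum _ _ _).mpr ⟨le_refl _, by have := sz_pos u; have := sz_pos v; omega⟩
      have m2 : base u' + base v' ∈ f u' + f v' :=
        (mem_sum _ _ _).mpr ⟨le_refl _, by have := sz_pos u'; have := sz_pos v'; omega⟩
      rw [heq] at m1; rw [← heq] at m2
      rw [mem_sum] at m1 m2
      omega
    have hb : idx u + n * (idx v + 1) = idx u' + n * (idx v' + 1) := by
      simpa only [hbase, hu, hu', if_pos, if_neg hv, if_neg hv'] using h1
    have hmod : idx u = idx u' := by
      have e1 : (idx u + n * (idx v + 1)) % n = idx u := by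
        rw [Nat.add_mul_mod_self_left, Nat.mod_eq_of_lt (idx_lt u)]
      have e2 : (idx u' + n * (idx v' + 1)) % n = idx u' := by
        rw [Nat.add_mul_mod_self_left, Nat.mod_eq_of_lt (idx_lt u')]
      rw [← e1, ← e2, hb]
    have huu : u = u' := idx_inj hmod
    have hvv : idx v = idx v' := by
      have : n * (idx v + 1) = n * (idx v' + 1) := by omega
      have := Nat.eq_of_mul_eq_mul_left npos this
      omega
    exact ⟨huu, idx_inj hvv⟩
  have fin2 : ∀ x y : Fin 2, x ≠ y → (x = 0 ∧ y ≠ 0) ∨ (y = 0 ∧ x ≠ 0) := by decide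
  refine ⟨f, ?_, ?_, ?_, ?_⟩
  · intro v
    exact ⟨base v, (mem_f _ _).mpr ⟨le_refl _, by have := sz_pos v; omega⟩⟩
  · intro a b hab
    have npos : 0 < n := Fintype.card_pos_iff.mpr ⟨a⟩
    have hba : base a = base b := by
      have m1 : base a ∈ f b := by
        rw [← hab]; exact (mem_f _ _).mpr ⟨le_refl _, by have := sz_pos a; omega⟩
      have m2 : base b ∈ f a := by
        rw [hab]; exact (mem_f _ _).mpr ⟨le_refl _, by have := sz_pos b; omega⟩
      rw [mem_f] at m1 m2; omega
    by_cases ha : C a = 0 <;> by_cases hbb : C b = 0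
    · simp only [hbase, ha, hbb, if_pos] at hba
      exact idx_inj hba
    · exfalso
      simp only [hbase, ha, if_pos, if_neg hbb] at hba
      have := idx_lt a
      nlinarith
    · exfalso
      simp only [hbase, hbb, if_pos, if_neg ha] at hba
      have := idx_lt b
      nlinarith
    · simp only [hbase, if_neg ha, if_neg hbb] at hba
      have := Nat.eq_of_mul_eq_mul_left npos hba
      exact idx_inj (by omega)
  · intro e1 he1 e2 he2 heq
    induction e1 using Sym2.ind with
    | _ u v =>
    induction e2 using Sym2.ind with
    | _ u' v' =>
    rw [SimpleGraph.mem_edgeSet] at he1 he2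
    simp only [edgeLabel, Sym2.lift_mk] at heq
    have h1 := fin2 _ _ (C.valid he1)
    have h2 := fin2 _ _ (C.valid he2)
    rw [Sym2.eq_iff]
    rcases h1 with ⟨hu, hv⟩ | ⟨hv, hu⟩ <;> rcases h2 with ⟨hu', hv'⟩ | ⟨hv', hu'⟩
    · exact Or.inl (key u v u' v' hu hv hu' hv' heq)
    · have := key u v v' u' hu hv hv' hu' (by rw [heq, add_comm])
      exact Or.inr ⟨this.1, this.2⟩
    · have := key v u u' v' hv hu hu' hv' (by rw [← heq, add_comm])
      exact Or.inr ⟨this.2, this.1⟩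
    · have := key v u v' u' hv hu hv' hu' (by rw [add_comm, heq, add_comm])
      exact Or.inl ⟨this.2, this.1⟩
  · intro u v huv
    have hne := C.valid huv
    rcases fin2 _ _ hne with ⟨hu, hv⟩ | ⟨hv, hu⟩
    · have s1 : sz u = 1 := by simp [hsz, hu]
      have s2 : sz v = k := by simp [hsz, hv]
      refine ⟨by rw [card_sum, s1, s2]; omega, by rw [card_f, card_f, s1, s2, one_mul]⟩
    · have s1 : sz v = 1 := by simp [hsz, hv]
      have s2 : sz u = k := by simp [hsz, hu]
      refine ⟨by rw [card_sum, s1, s2]; omega, by rw [card_f, card_f, s1, s2, mul_one]⟩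
end

section
/- Let n ≥ 3 and let f be a strongly k-uniform integer additive set-labeling of the complete graph K_n, i.e., f assigns injectively nonempty finite sets of nonnegative integers to the n vertices with |f(u) + f(v)| = k = |f(u)|·|f(v)| for every pair of distinct vertices u, v. Then k is a perfect square and f is (k, l)-completely uniform with l = √k: there is a positive integer l with k = l² and |f(v)| = l for every vertex v. -/
open Finset Pointwise

/-- A strongly `k`-uniform integer additive set-labeling of the complete graph `K_n`
(`n ≥ 3`) is `(k, l)`-completely uniform with `l = √k`: `k` is a perfect square and all
vertex labels have cardinality `l = √k`. -/
theorem strongly_uniform_IASL_completeGraph_completely_uniform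
    (n k : ℕ) (hn : 3 ≤ n) (f : Fin n → Finset ℕ)
    (hinj : Function.Injective f) (hne : ∀ v, (f v).Nonempty)
    (hstrong : ∀ u v : Fin n, u ≠ v →
      (f u + f v).card = k ∧ k = (f u).card * (f v).card) :
    ∃ l : ℕ, 0 < l ∧ k = l ^ 2 ∧ ∀ v, (f v).card = l := by
  have h0 : (0 : ℕ) < n := by omega
  have h1 : (1 : ℕ) < n := by omega
  have h2 : (2 : ℕ) < n := by omega
  set v0 : Fin n := ⟨0, h0⟩
  set v1 : Fin n := ⟨1, h1⟩
  set v2 : Fin n := ⟨2, h2⟩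
  have hpos : ∀ v, 0 < (f v).card := fun v => card_pos.mpr (hne v)
  have h01 := (hstrong v0 v1 (by simp [v0, v1, Fin.ext_iff])).2
  have h02 := (hstrong v0 v2 (by simp [v0, v2, Fin.ext_iff])).2
  have h12 := (hstrong v1 v2 (by simp [v1, v2, Fin.ext_iff])).2
  have hc12 : (f v1).card = (f v2).card :=
    Nat.eq_of_mul_eq_mul_left (hpos v0) (h01 ▸ h02)
  have hc02 : (f v0).card = (f v2).card := by
    have := h01 ▸ h12
    exact Nat.eq_of_mul_eq_mul_right (hpos v1) (by linarith [Nat.mul_comm (f v0).card (f v1).card, Nat.mul_comm (f v1).card (f v2).card])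
  refine ⟨(f v0).card, hpos v0, ?_, ?_⟩
  · rw [h01, hc12, ← hc02, sq]
  · intro v
    by_cases hv0 : v = v0
    · rw [hv0]
    by_cases hv1 : v = v1
    · rw [hv1, hc12, ← hc02]
    have hk := (hstrong v0 v (Ne.symm hv0)).2
    have := h01 ▸ hk
    have := Nat.eq_of_mul_eq_mul_left (hpos v0) this
    rw [← this, hc12, ← hc02]
end

section
/- Let G be a connected non-bipartite (i.e., not 2-colorable) simple graph on a finite vertex set and suppose G admits a strongly k-uniform integer additive set-labeling f. Then k is a perfect square and f is (k, l)-completely uniform with l = √k: there is a positive integer l with k = l² and |f(v)| = l for every vertex v of G. -/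
open Finset Pointwise

/-- If a connected non-bipartite graph admits a strongly `k`-uniform integer additive
set-labeling `f`, then `k` is a perfect square and `f` is `(k, l)`-completely uniform
with `l = √k`. -/
theorem strongly_uniform_IASL_connected_nonbipartite_completely_uniform
    {V : Type*} [Fintype V] (G : SimpleGraph V)
    (hconn : G.Connected) (hnb : ¬ G.Colorable 2)
    (k : ℕ) (f : V → Finset ℕ)
    (hinj : Function.Injective f) (hne : ∀ v, (f v).Nonempty)
    (hstrong : ∀ u v, G.Adj u v →
      (f u + f v).card = k ∧ k = (f u).card * (f v).card) :
    ∃ l : ℕ, 0 < l ∧ k = l ^ 2 ∧ ∀ v, (f v).card = l := by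
  classical
  obtain ⟨v₀⟩ := hconn.nonempty
  set g : V → ℕ := fun v => (f v).card with hg
  have hgpos : ∀ v, 0 < g v := fun v => Finset.card_pos.2 (hne v)
  have hedge : ∀ u v, G.Adj u v → g u * g v = k := fun u v h => ((hstrong u v h).2).symm
  have step : ∀ (a : ℕ) (x y : V), G.Adj x y →
      (g x = a ∨ g x * a = k) → (g y = a ∨ g y * a = k) := by
    intro a x y hxy hx
    have hk := hedge x y hxy
    rcases hx with h | h
    · right; rw [← hk, h, mul_comm]
    · left
      have hxx : g x * g y = g x * a := by rw [hk, ← h]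
      exact Nat.eq_of_mul_eq_mul_left (hgpos x) hxx
  have walkP : ∀ (a : ℕ) {x y : V} (_ : G.Walk x y),
      (g x = a ∨ g x * a = k) → (g y = a ∨ g y * a = k) := by
    intro a x y p
    induction p with
    | nil => exact id
    | cons h p ih => exact fun hx => ih (step a _ _ h hx)
  by_cases hsq : ∃ v, g v * g v = k
  · obtain ⟨w, hw⟩ := hsq
    refine ⟨g w, hgpos w, by rw [sq]; exact hw.symm, ?_⟩
    intro v
    have hv := walkP (g w) ((hconn w v).some) (Or.inl rfl)
    rcases hv with h | h
    · exact h
    · exact Nat.eq_of_mul_eq_mul_right (hgpos w) (h.trans hw.symm)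
  · exfalso
    push_neg at hsq
    apply hnb
    set a := g v₀ with ha
    have key : ∀ v, g v = a ∨ g v * a = k := fun v =>
      walkP a ((hconn v₀ v).some) (Or.inl rfl)
    have hvalid : ∀ {u v : V}, G.Adj u v →
        (if g u = a then (0 : Fin 2) else 1) ≠ (if g v = a then 0 else 1) := by
      intro u v huv
      have hk := hedge u v huv
      rcases key u with hu | hu <;> rcases key v with hv | hv
      · exact absurd (by rw [hv, ← hu] at hk; exact hk) (hsq u)
      · have hva : g v ≠ a := by
          intro h; exact hsq v (by rw [← h] at hv; exact hv)
        simp [hu, hva]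
      · have hua : g u ≠ a := by
          intro h; exact hsq u (by rw [← h] at hu; exact hu)
        simp [hv, hua]
      · have huv' : g u = g v := Nat.eq_of_mul_eq_mul_right (hgpos v₀) (hu.trans hv.symm)
        exact absurd (by rw [huv'] at hk; exact hk) (hsq v)
    exact ⟨SimpleGraph.Coloring.mk (fun v => if g v = a then 0 else 1) hvalid⟩
end

section
/- Let k be a positive integer that is not a perfect square. A simple graph G on a finite vertex set admits a strongly k-uniform integer additive set-indexer if and only if G is bipartite (i.e., 2-colorable). -/
open Finset Pointwise

/-- For a positive integer `k` that is not a perfect square, a graph admits a strongly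
`k`-uniform integer additive set-indexer iff it is bipartite (2-colorable). -/
theorem admits_strongly_uniform_IASI_iff_bipartite {V : Type*} [Fintype V]
    (G : SimpleGraph V) (k : ℕ) (hk : 0 < k) (hns : ¬ IsSquare k) :
    (∃ f : V → Finset ℕ, (∀ v, (f v).Nonempty) ∧ Function.Injective f ∧
        Set.InjOn (edgeLabel f) G.edgeSet ∧
        ∀ u v, G.Adj u v → (f u + f v).card = k ∧ k = (f u).card * (f v).card) ↔
      G.Colorable 2 := by
  classical
  constructor
  · rintro ⟨f, hne, hinj, hlab, hcard⟩
    refine ⟨SimpleGraph.Coloring.mk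
      (fun v => if (f v).card ^ 2 < k then (0 : Fin 2) else 1) ?_⟩
    intro u v huv heq
    obtain ⟨h1, h2⟩ := hcard u v huv
    have hu : 0 < (f u).card := Finset.card_pos.2 (hne u)
    have hv : 0 < (f v).card := Finset.card_pos.2 (hne v)
    have hu2 : (f u).card ^ 2 ≠ k := fun h => hns ⟨(f u).card, by rw [← h]; ring⟩
    have hv2 : (f v).card ^ 2 ≠ k := fun h => hns ⟨(f v).card, by rw [← h]; ring⟩
    by_cases hP : (f u).card ^ 2 < k <;> by_cases hQ : (f v).card ^ 2 < k <;>
      simp only [hP, hQ, if_true, if_false] at heq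
    · nlinarith
    · simp at heq
    · simp at heq
    · have hPu : k < (f u).card ^ 2 := lt_of_le_of_ne (not_lt.1 hP) (Ne.symm hu2)
      have hQv : k < (f v).card ^ 2 := lt_of_le_of_ne (not_lt.1 hQ) (Ne.symm hv2)
      nlinarith
  · intro hcol
    obtain ⟨C⟩ := hcol
    set n := Fintype.card V with hn
    set e := Fintype.equivFin V with he
    set g : V → ℕ := fun v => (e v : ℕ) with hg
    have hginj : Function.Injective g := fun a b h => e.injective (Fin.ext h)
    set M := n + 1 with hM
    have hgM : ∀ v, g v < M := fun v => Nat.lt_succ_of_lt (e v).2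
    have hk2 : 2 ≤ k := by
      rcases Nat.lt_or_ge k 2 with h | h
      · interval_cases k
        exact absurd ⟨1, rfl⟩ hns
      · exact h
    set B : V → Finset ℕ := fun v => (Finset.range k).image (fun i => M * g v + i) with hB
    have hBmem : ∀ v x, x ∈ B v ↔ ∃ i < k, x = M * g v + i := by
      intro v x
      simp only [hB, Finset.mem_image, Finset.mem_range]
      constructor
      · rintro ⟨i, hi, rfl⟩; exact ⟨i, hi, rfl⟩
      · rintro ⟨i, hi, rfl⟩; exact ⟨i, hi, rfl⟩
    have hBcard : ∀ v, (B v).card = k := by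
      intro v
      rw [hB]
      rw [Finset.card_image_of_injective _ (fun a b h => by omega)]
      exact Finset.card_range k
    have hBinj : ∀ v w, B v = B w → v = w := by
      intro v w hvw
      have h1 : M * g v ∈ B w := by
        rw [← hvw, hBmem]; exact ⟨0, hk, by omega⟩
      have h2 : M * g w ∈ B v := by
        rw [hvw, hBmem]; exact ⟨0, hk, by omega⟩
      rw [hBmem] at h1 h2
      obtain ⟨i, _, hi⟩ := h1
      obtain ⟨j, _, hj⟩ := h2
      have : M * g v = M * g w := by omega
      exact hginj (Nat.eq_of_mul_eq_mul_left (by omega) this)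
    set f : V → Finset ℕ := fun v => if C v = 0 then {g v} else B v with hf
    -- key sumset description
    have hkey : ∀ u v, C u = 0 → C v ≠ 0 → ∀ x,
        x ∈ f u + f v ↔ ∃ i < k, x = g u + M * g v + i := by
      intro u v hu hv x
      simp only [hf, if_pos hu, if_neg hv, Finset.mem_add, Finset.mem_singleton]
      constructor
      · rintro ⟨y, rfl, z, hz, rfl⟩
        rw [hBmem] at hz
        obtain ⟨i, hi, rfl⟩ := hz
        exact ⟨i, hi, by omega⟩
      · rintro ⟨i, hi, rfl⟩
        exact ⟨g u, rfl, M * g v + i, (hBmem v _).2 ⟨i, hi, rfl⟩, by omega⟩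
    have hkey2 : ∀ u v u' v', C u = 0 → C v ≠ 0 → C u' = 0 → C v' ≠ 0 →
        f u + f v = f u' + f v' → u = u' ∧ v = v' := by
      intro u v u' v' hu hv hu' hv' heq
      have h1 : g u + M * g v ∈ f u' + f v' := by
        rw [← heq, hkey u v hu hv]; exact ⟨0, hk, by omega⟩
      have h2 : g u' + M * g v' ∈ f u + f v := by
        rw [heq, hkey u' v' hu' hv']; exact ⟨0, hk, by omega⟩
      rw [hkey u' v' hu' hv'] at h1
      rw [hkey u v hu hv] at h2
      obtain ⟨i, _, hi⟩ := h1
      obtain ⟨j, _, hj⟩ := h2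
      have hab : g u + M * g v = g u' + M * g v' := by omega
      have hmod : g u = g u' := by
        have := congrArg (· % M) hab
        simpa [Nat.add_mul_mod_self_left, Nat.mod_eq_of_lt (hgM u),
          Nat.mod_eq_of_lt (hgM u')] using this
      have : g v = g v' := by
        have : M * g v = M * g v' := by omega
        exact Nat.eq_of_mul_eq_mul_left (by omega) this
      exact ⟨hginj hmod, hginj this⟩
    have hcards : ∀ v, C v = 0 → (f v).card = 1 := by
      intro v hv; simp [hf, hv]
    have hcards' : ∀ v, C v ≠ 0 → (f v).card = k := by
      intro v hv; simp only [hf, if_neg hv]; exact hBcard v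
    have hfin2 : ∀ v : Fin 2, v = 0 ∨ v = 1 := by decide
    have color_cases : ∀ {u v : V}, G.Adj u v → (C u = 0 ∧ C v ≠ 0) ∨ (C v = 0 ∧ C u ≠ 0) := by
      intro u v huv
      have hne' := C.valid huv
      rcases hfin2 (C u) with h | h
      · left; exact ⟨h, fun hc => hne' (h.trans hc.symm)⟩
      · right
        rcases hfin2 (C v) with h' | h'
        · exact ⟨h', by rw [h]; decide⟩
        · exact absurd (h.trans h'.symm) hne'
    refine ⟨f, ?_, ?_, ?_, ?_⟩
    · intro v
      by_cases hv : C v = 0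
      · simp [hf, hv]
      · simp only [hf, if_neg hv]
        exact ⟨M * g v, (hBmem v _).2 ⟨0, hk, by omega⟩⟩
    · intro u v huv
      by_cases hu : C u = 0 <;> by_cases hv : C v = 0
      · simp only [hf, if_pos hu, if_pos hv, Finset.singleton_inj] at huv
        exact hginj huv
      · exfalso
        have := congrArg Finset.card huv
        rw [hcards u hu, hcards' v hv] at this
        omega
      · exfalso
        have := congrArg Finset.card huv
        rw [hcards' u hu, hcards v hv] at this
        omega
      · simp only [hf, if_neg hu, if_neg hv] at huv
        exact hBinj u v huv
    · intro e1 he1 e2 he2 heq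
      induction e1 using Sym2.ind with
      | _ u1 v1 =>
      induction e2 using Sym2.ind with
      | _ u2 v2 =>
      rw [SimpleGraph.mem_edgeSet] at he1 he2
      have hl1 : edgeLabel f s(u1, v1) = f u1 + f v1 := rfl
      have hl2 : edgeLabel f s(u2, v2) = f u2 + f v2 := rfl
      rw [hl1, hl2] at heq
      rcases color_cases he1 with ⟨ha1, hb1⟩ | ⟨ha1, hb1⟩ <;>
        rcases color_cases he2 with ⟨ha2, hb2⟩ | ⟨ha2, hb2⟩
      · obtain ⟨h1, h2⟩ := hkey2 u1 v1 u2 v2 ha1 hb1 ha2 hb2 heq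
        rw [h1, h2]
      · obtain ⟨h1, h2⟩ := hkey2 u1 v1 v2 u2 ha1 hb1 ha2 hb2
          (by rw [heq, add_comm])
        rw [h1, h2, Sym2.eq_swap]
      · obtain ⟨h1, h2⟩ := hkey2 v1 u1 u2 v2 ha1 hb1 ha2 hb2
          (by rw [← heq, add_comm])
        rw [h1, h2, Sym2.eq_swap]
      · obtain ⟨h1, h2⟩ := hkey2 v1 u1 v2 u2 ha1 hb1 ha2 hb2
          (by rw [add_comm, heq, add_comm])
        rw [h1, h2]
    · intro u v huv
      rcases color_cases huv with ⟨ha, hb⟩ | ⟨ha, hb⟩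
      · constructor
        · have : ∀ x, x ∈ f u + f v ↔ ∃ i < k, x = g u + M * g v + i := hkey u v ha hb
          have heq : f u + f v = (Finset.range k).image (fun i => g u + M * g v + i) := by
            ext x
            rw [this x]
            simp only [Finset.mem_image, Finset.mem_range]
            constructor
            · rintro ⟨i, hi, rfl⟩; exact ⟨i, hi, rfl⟩
            · rintro ⟨i, hi, rfl⟩; exact ⟨i, hi, rfl⟩
          rw [heq, Finset.card_image_of_injective _ (fun a b h => by omega),
            Finset.card_range]
        · rw [hcards u ha, hcards' v hb, one_mul]
      · constructor
        · have : ∀ x, x ∈ f v + f u ↔ ∃ i < k, x = g v + M * g u + i :=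
            hkey v u ha hb
          have heq : f u + f v = (Finset.range k).image (fun i => g v + M * g u + i) := by
            rw [add_comm]
            ext x
            rw [this x]
            simp only [Finset.mem_image, Finset.mem_range]
            constructor
            · rintro ⟨i, hi, rfl⟩; exact ⟨i, hi, rfl⟩
            · rintro ⟨i, hi, rfl⟩; exact ⟨i, hi, rfl⟩
          rw [heq, Finset.card_image_of_injective _ (fun a b h => by omega),
            Finset.card_range]
        · rw [hcards v ha, hcards' u hb, mul_one]
end
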